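/- The action profile (α₁, α₂) = (1,1) is a pure Nash equilibrium of the channel selection game if and only if g_{1,1}^{(1)} ≥ g_{1,1}^{(2)}(1 + g_{1,2}^{(1)}) and g_{2,2}^{(1)} ≥ g_{2,2}^{(2)}(1 + g_{2,1}^{(1)}). -/
import Mathlib


open Real Set

/-- Utility of a player with direct gains `gk1 gk2`, cross gains `gi1 gi2`,
own action `a`, opponent action `b`. -/
noncomputable def u (gk1 gk2 gi1 gi2 a b : ℝ) : ℝ :=
  Real.logb 2 (1 + a * gk1 / (1 + b * gi1)) +
  Real.logb 2 (1 + (1 - a) * gk2 / (1 + (1 - b) * gi2))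

lemma u_key (gk1 gk2 gi1 gi2 : ℝ) (h1 : 0 < gk1) (h2 : 0 < gk2) (h3 : 0 < gi1)
    (h4 : 0 < gi2) :
    u gk1 gk2 gi1 gi2 0 1 ≤ u gk1 gk2 gi1 gi2 1 1 ↔ gk2 * (1 + gi1) ≤ gk1 := by
  simp only [u]
  norm_num
  rw [Real.logb_le_logb one_lt_two (by positivity) (by positivity),
    add_le_add_iff_left, le_div_iff₀ (by positivity)]

/-- `(1,1)` is a pure NE of the CS game iff
`g_{1,1}^{(1)} ≥ g_{1,1}^{(2)}(1+g_{1,2}^{(1)})` and `g_{2,2}^{(1)} ≥ g_{2,2}^{(2)}(1+g_{2,1}^{(1)})`. -/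
theorem cs_NE_one_one_iff
    (g111 g112 g121 g122 g211 g212 g221 g222 : ℝ)
    (h111 : 0 < g111) (h112 : 0 < g112) (h121 : 0 < g121) (h122 : 0 < g122)
    (h211 : 0 < g211) (h212 : 0 < g212) (h221 : 0 < g221) (h222 : 0 < g222) :
    ((∀ a1' ∈ ({0, 1} : Set ℝ),
        u g111 g112 g121 g122 a1' 1 ≤ u g111 g112 g121 g122 1 1) ∧
     (∀ a2' ∈ ({0, 1} : Set ℝ),
        u g221 g222 g211 g212 a2' 1 ≤ u g221 g222 g211 g212 1 1))
    ↔ (g112 * (1 + g121) ≤ g111 ∧ g222 * (1 + g211) ≤ g221) := by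
  simp only [Set.mem_insert_iff, Set.mem_singleton_iff, forall_eq_or_imp, forall_eq]
  rw [u_key _ _ _ _ h111 h112 h121 h122, u_key _ _ _ _ h221 h222 h211 h212]
  simp [le_refl]
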